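/- For every p ∈ (0, 1/2), one has (2/3)·(1 − H_b(p)) < (1/3)·(D_b(1/2 ‖ p) + D_b(p ‖ 1/2)); in the ternary example this says that I(X;Y)|_P is strictly smaller than D(P_{XY} ‖ Q_{XY}). -/

import Mathlib

open scoped BigOperators

noncomputable section

/-- The binary relative entropy `D_b(a‖b) = a log₂(a/b) + (1-a) log₂((1-a)/(1-b))`. -/
def Db (a b : ℝ) : ℝ :=
  a * Real.logb 2 (a / b) + (1 - a) * Real.logb 2 ((1 - a) / (1 - b))

/-- The binary entropy function `H_b(p) = -p log₂ p - (1-p) log₂ (1-p)`. -/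
def Hb (p : ℝ) : ℝ := -p * Real.logb 2 p - (1 - p) * Real.logb 2 (1 - p)

/-- `P_{Y|X}(1|x)` in the ternary example: `1/2, p, 1-p` for `x = 0, 1, 2`. -/
def pGivenX (p : ℝ) : Fin 3 → ℝ := fun x => if x = 0 then 1 / 2 else if x = 1 then p else 1 - p

/-- `Q_{Y|X}(1|x)` in the ternary example: `p, 1/2, 1-p` for `x = 0, 1, 2`. -/
def qGivenX (p : ℝ) : Fin 3 → ℝ := fun x => if x = 0 then p else if x = 1 then 1 / 2 else 1 - p

/-- `P_{XY}` in the ternary example: `X` uniform on `{0,1,2}` and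
`P_{Y|X}(1|0) = 1/2`, `P_{Y|X}(1|1) = p`, `P_{Y|X}(1|2) = 1-p`. -/
def Pxy (p : ℝ) : Fin 3 × Fin 2 → ℝ :=
  fun z => (1 / 3) * (if z.2 = 1 then pGivenX p z.1 else 1 - pGivenX p z.1)

/-- `Q_{XY}` in the ternary example: `X` uniform on `{0,1,2}` and
`Q_{Y|X}(1|0) = p`, `Q_{Y|X}(1|1) = 1/2`, `Q_{Y|X}(1|2) = 1-p`. -/
def Qxy (p : ℝ) : Fin 3 × Fin 2 → ℝ :=
  fun z => (1 / 3) * (if z.2 = 1 then qGivenX p z.1 else 1 - qGivenX p z.1)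

lemma logLtHalf {x : ℝ} (hx : 1 < x) : Real.log x < (x - x⁻¹) / 2 := by
  have h0 : (0:ℝ) < x := lt_trans one_pos hx
  have h := (Real.self_lt_sinh_iff (x := Real.log x)).2 (Real.log_pos hx)
  rwa [Real.sinh_eq, Real.exp_log h0, ← Real.log_inv, Real.exp_log (by positivity)] at h

noncomputable def f (q : ℝ) : ℝ :=
  2 * Real.log 2 + (q + 1/2) * Real.log q + (3/2 - q) * Real.log (1 - q)

lemma f_hasDeriv {q : ℝ} (h0 : 0 < q) (h1 : q < 1) :
    HasDerivAt f (Real.log q + (q + 1/2) * q⁻¹ +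
      (-Real.log (1 - q) + (3/2 - q) * (-(1 - q)⁻¹))) q := by
  have hq : q ≠ 0 := ne_of_gt h0
  have h1q : (1:ℝ) - q ≠ 0 := by linarith
  have hA : HasDerivAt (fun q : ℝ => (q + 1/2) * Real.log q)
      (1 * Real.log q + (q + 1/2) * q⁻¹) q :=
    ((hasDerivAt_id q).add_const (1/2)).mul (Real.hasDerivAt_log hq)
  have hlog1q : HasDerivAt (fun q : ℝ => Real.log (1 - q)) (-(1 - q)⁻¹) q := by
    have : HasDerivAt (fun q : ℝ => (1:ℝ) - q) (-1) q := by
      simpa using (hasDerivAt_id q).const_sub 1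
    exact ((Real.hasDerivAt_log h1q).comp q this).congr_deriv (by ring)
  have hB : HasDerivAt (fun q : ℝ => (3/2 - q) * Real.log (1 - q))
      ((-1) * Real.log (1 - q) + (3/2 - q) * (-(1 - q)⁻¹)) q := by
    have h32 : HasDerivAt (fun q : ℝ => (3:ℝ)/2 - q) (-1) q := by
      simpa using (hasDerivAt_id q).const_sub (3/2)
    exact h32.mul hlog1q
  have := (hA.const_add (2 * Real.log 2)).add hB
  exact this.congr_deriv (by ring)

lemma f_neg {p : ℝ} (hp0 : 0 < p) (hp2 : p < 1/2) : f p < 0 := by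
  have key : StrictMonoOn f (Set.Icc p (1/2)) := by
    apply strictMonoOn_of_deriv_pos (convex_Icc _ _)
    · intro q hq
      have h0 : 0 < q := lt_of_lt_of_le hp0 hq.1
      have h1 : q < 1 := lt_of_le_of_lt hq.2 (by norm_num)
      exact (f_hasDeriv h0 h1).differentiableAt.continuousAt.continuousWithinAt
    · intro q hq
      rw [interior_Icc] at hq
      have h0 : 0 < q := lt_trans hp0 hq.1
      have h2 : q < 1/2 := hq.2
      have h1 : q < 1 := by linarith
      rw [(f_hasDeriv h0 h1).deriv]
      -- deriv = log q - log (1-q) + (q+1/2)/q - (3/2-q)/(1-q) > 0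
      have hx : (1:ℝ) < (1 - q) / q := by
        rw [lt_div_iff₀ h0]; linarith
      have h := logLtHalf hx
      have hlog : Real.log ((1 - q) / q) = Real.log (1 - q) - Real.log q :=
        Real.log_div (by linarith) (ne_of_gt h0)
      have hval : ((1 - q) / q - ((1 - q) / q)⁻¹) / 2
          = (q + 1/2) * q⁻¹ + (3/2 - q) * (-(1 - q)⁻¹) := by
        have h1q : (1:ℝ) - q ≠ 0 := by linarith
        field_simp
        ring
      rw [hlog, hval] at h
      linarith
  have h12 : f (1/2) = 0 := by
    have e1 : Real.log (1/2 : ℝ) = -Real.log 2 := by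
      rw [show (1:ℝ)/2 = 2⁻¹ by norm_num, Real.log_inv]
    have e2 : (1:ℝ) - 1/2 = 1/2 := by norm_num
    simp only [f, e2, e1]
    ring
  have := key (Set.left_mem_Icc.2 (le_of_lt hp2)) (Set.right_mem_Icc.2 (le_of_lt hp2)) hp2
  rwa [h12] at this

/-- For every `p ∈ (0, 1/2)`, one has
`(2/3)(1 - H_b(p)) < (1/3)(D_b(1/2 ‖ p) + D_b(p ‖ 1/2))`; in the ternary example this says
that `I(X;Y)|_P` is strictly smaller than `D(P_{XY} ‖ Q_{XY})`. -/
theorem statement14 (p : ℝ) (hp : p ∈ Set.Ioo (0 : ℝ) (1 / 2)) :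
    (2 / 3) * (1 - Hb p) < (1 / 3) * (Db (1 / 2) p + Db p (1 / 2)) := by
  obtain ⟨hp0, hp2⟩ := hp
  have h1p : (0:ℝ) < 1 - p := by linarith
  have key := f_neg hp0 hp2
  simp only [f] at key
  have hc : (0:ℝ) < Real.log 2 := Real.log_pos (by norm_num)
  have hhalf : Real.log (1/2 : ℝ) = -Real.log 2 := by
    rw [show (1:ℝ)/2 = 2⁻¹ by norm_num, Real.log_inv]
  have e1 : Real.log ((1/2 : ℝ)/p) = -Real.log 2 - Real.log p := by
    rw [Real.log_div (by norm_num) hp0.ne', hhalf]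
  have e2 : Real.log ((1/2 : ℝ)/(1-p)) = -Real.log 2 - Real.log (1-p) := by
    rw [Real.log_div (by norm_num) h1p.ne', hhalf]
  have e3 : Real.log (p/(1/2 : ℝ)) = Real.log p + Real.log 2 := by
    rw [Real.log_div hp0.ne' (by norm_num), hhalf]; ring
  have e4 : Real.log ((1-p)/(1/2 : ℝ)) = Real.log (1-p) + Real.log 2 := by
    rw [Real.log_div h1p.ne' (by norm_num), hhalf]; ring
  simp only [Db, Hb, Real.logb, show (1:ℝ) - 1/2 = 1/2 by norm_num, e1, e2, e3, e4]
  have expand : ((-Real.log 2 - Real.log p) / Real.log 2) = -1 - Real.log p / Real.log 2 := by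
    field_simp
  have expand2 : ((-Real.log 2 - Real.log (1-p)) / Real.log 2) = -1 - Real.log (1-p) / Real.log 2 := by
    field_simp
  have expand3 : ((Real.log p + Real.log 2) / Real.log 2) = Real.log p / Real.log 2 + 1 := by
    field_simp
  have expand4 : ((Real.log (1-p) + Real.log 2) / Real.log 2) = Real.log (1-p) / Real.log 2 + 1 := by
    field_simp
  rw [expand, expand2, expand3, expand4]
  set a := Real.log p / Real.log 2 with hadef
  set b := Real.log (1-p) / Real.log 2 with hbdef
  have ha : Real.log p = a * Real.log 2 := by
    rw [hadef]; field_simp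
  have hb : Real.log (1-p) = b * Real.log 2 := by
    rw [hbdef]; field_simp
  rw [ha, hb] at key
  have key2 : 2 + (p + 1/2) * a + (3/2 - p) * b < 0 := by
    by_contra hcon
    push_neg at hcon
    nlinarith
  linarith
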